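/- arXiv:1703.09330 — 4 statements merged into one kernel-verified Lean document; each statement's English description precedes it below -/
import Mathlib

section
/- Let G be a group and f, g, h ∈ G be nontrivial elements such that the six values q_f(g), q_g(f), q_g(h), q_h(g), q_f(h), q_h(f) are all finite (hence all ≥ 1). Then, with d(x, y) := log(max{q_y(x), q_x(y)}) (real logarithm of the natural-number value), the triangle inequality holds: d(f, h) ≤ d(f, g) + d(g, h). -/
/-- The conjugation-generated norm `q_K` : the infimum in `ℕ∞` of the lengths of
expressions of `g` as a product of elements each conjugate to an element of `K`
or to the inverse of an element of `K`. -/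
noncomputable def qNorm {G : Type*} [Group G] (K : Set G) (g : G) : ℕ∞ :=
  sInf {n : ℕ∞ | ∃ l : List G, (l.length : ℕ∞) = n ∧ l.prod = g ∧
    ∀ x ∈ l, ∃ k ∈ K, IsConj k x ∨ IsConj k⁻¹ x}

private lemma enat_sInf_mem {S : Set ℕ∞} (hS : sInf S ≠ ⊤) : sInf S ∈ S := by
  have hne : ∃ k : ℕ, (k : ℕ∞) ∈ S := by
    by_contra hc
    push_neg at hc
    apply hS
    rw [eq_top_iff]
    apply le_sInf
    intro b hb
    cases b with
    | top => exact le_refl _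
    | coe m => exact absurd hb (hc m)
  set T : Set ℕ := {k : ℕ | (k : ℕ∞) ∈ S} with hT
  have hTne : T.Nonempty := hne
  have hmem : sInf T ∈ T := Nat.sInf_mem hTne
  have : sInf S = ((sInf T : ℕ) : ℕ∞) := by
    apply le_antisymm
    · exact sInf_le (show ((sInf T : ℕ) : ℕ∞) ∈ S from hmem)
    · apply le_sInf
      intro b hb
      cases b with
      | top => exact le_top
      | coe m => exact_mod_cast Nat.sInf_le (show m ∈ T from hb)
  rw [this]; exact hmem

section Tsuboi

variable {G : Type*} [Group G]

private def Qc (f y : G) : Prop := IsConj f y ∨ IsConj f⁻¹ y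

private lemma Qc_conj {f y : G} (hy : Qc f y) (a : G) : Qc f (a * y * a⁻¹) := by
  have hc : IsConj y (a * y * a⁻¹) := by
    rw [isConj_iff]; exact ⟨a, rfl⟩
  rcases hy with hy | hy
  · exact Or.inl (hy.trans hc)
  · exact Or.inr (hy.trans hc)

private lemma isconj_inv {a b : G} (hab : IsConj a b) : IsConj a⁻¹ b⁻¹ := by
  rw [isConj_iff] at *
  obtain ⟨c, rfl⟩ := hab
  exact ⟨c, by group⟩

private lemma Qc_inv {f y : G} (hy : Qc f y) : Qc f y⁻¹ := by
  rcases hy with hy | hy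
  · exact Or.inr (isconj_inv hy)
  · exact Or.inl (by simpa using isconj_inv hy)

private lemma conj_map_prod (a : G) : ∀ l : List G,
    (l.map (fun y => a * y * a⁻¹)).prod = a * l.prod * a⁻¹ := by
  intro l
  induction l with
  | nil => simp
  | cons x xs ih => simp only [List.map_cons, List.prod_cons, ih]; group

private lemma step_lemma {f g x : G} {l : List G} (hQ : ∀ y ∈ l, Qc f y)
    (hprod : l.prod = g) (hx : Qc g x) :
    ∃ l' : List G, l'.length = l.length ∧ l'.prod = x ∧ ∀ y ∈ l', Qc f y := by
  rcases hx with hx | hx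
  · rw [isConj_iff] at hx
    obtain ⟨a, ha⟩ := hx
    refine ⟨l.map (fun y => a * y * a⁻¹), by simp, ?_, ?_⟩
    · rw [conj_map_prod, hprod, ha]
    · intro y hy
      simp only [List.mem_map] at hy
      obtain ⟨z, hz, rfl⟩ := hy
      exact Qc_conj (hQ z hz) a
  · rw [isConj_iff] at hx
    obtain ⟨a, ha⟩ := hx
    refine ⟨(l.map (fun y => y⁻¹)).reverse.map (fun y => a * y * a⁻¹), by simp, ?_, ?_⟩
    · rw [conj_map_prod, ← List.prod_inv_reverse, hprod, ha]
    · intro y hy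
      simp only [List.mem_map, List.mem_reverse] at hy
      obtain ⟨z, ⟨w, hw, rfl⟩, rfl⟩ := hy
      exact Qc_conj (Qc_inv (hQ w hw)) a

private lemma replace_list {f g : G} {l : List G} (hQ : ∀ y ∈ l, Qc f y)
    (hprod : l.prod = g) :
    ∀ L : List G, (∀ x ∈ L, Qc g x) →
      ∃ L' : List G, L'.length = L.length * l.length ∧ L'.prod = L.prod ∧
        ∀ y ∈ L', Qc f y := by
  intro L
  induction L with
  | nil => exact fun _ => ⟨[], by simp, by simp, by simp⟩
  | cons x xs ih =>
    intro hL
    obtain ⟨l', hl'len, hl'prod, hl'Q⟩ :=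
      step_lemma hQ hprod (hL x (List.mem_cons_self))
    obtain ⟨L', hL'len, hL'prod, hL'Q⟩ := ih (fun y hy => hL y (List.mem_cons_of_mem x hy))
    refine ⟨l' ++ L', ?_, ?_, ?_⟩
    · simp [hl'len, hL'len, Nat.succ_mul, Nat.add_comm]
    · simp [hl'prod, hL'prod]
    · intro y hy
      rcases List.mem_append.mp hy with hy | hy
      · exact hl'Q y hy
      · exact hL'Q y hy

private lemma mem_qNorm_set {f x : G} {l : List G} (hprod : l.prod = x)
    (hQ : ∀ y ∈ l, Qc f y) :
    (l.length : ℕ∞) ∈ {n : ℕ∞ | ∃ l : List G, (l.length : ℕ∞) = n ∧ l.prod = x ∧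
      ∀ y ∈ l, ∃ k ∈ ({f} : Set G), IsConj k y ∨ IsConj k⁻¹ y} := by
  exact ⟨l, rfl, hprod, fun y hy => ⟨f, rfl, hQ y hy⟩⟩

private lemma qNorm_exists_list {f x : G} (hx : qNorm {f} x ≠ ⊤) :
    ∃ l : List G, (l.length : ℕ∞) = qNorm {f} x ∧ l.prod = x ∧ ∀ y ∈ l, Qc f y := by
  have := enat_sInf_mem (S := {n : ℕ∞ | ∃ l : List G, (l.length : ℕ∞) = n ∧ l.prod = x ∧
      ∀ y ∈ l, ∃ k ∈ ({f} : Set G), IsConj k y ∨ IsConj k⁻¹ y}) hx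
  obtain ⟨l, hlen, hprod, hQ⟩ := this
  refine ⟨l, hlen, hprod, fun y hy => ?_⟩
  obtain ⟨k, hk, hkQ⟩ := hQ y hy
  rw [Set.mem_singleton_iff] at hk
  subst hk
  exact hkQ

private lemma qNorm_submul {f g h : G} (h1 : qNorm {f} g ≠ ⊤) (h3 : qNorm {g} h ≠ ⊤) :
    qNorm {f} h ≤ qNorm {f} g * qNorm {g} h := by
  obtain ⟨l, hllen, hlprod, hlQ⟩ := qNorm_exists_list h1
  obtain ⟨L, hLlen, hLprod, hLQ⟩ := qNorm_exists_list h3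
  obtain ⟨L', hL'len, hL'prod, hL'Q⟩ := replace_list hlQ hlprod L hLQ
  have hle : qNorm {f} h ≤ (L'.length : ℕ∞) :=
    sInf_le (mem_qNorm_set (hL'prod.trans hLprod) hL'Q)
  calc qNorm {f} h ≤ (L'.length : ℕ∞) := hle
    _ = (L.length : ℕ∞) * (l.length : ℕ∞) := by rw [hL'len]; push_cast; ring
    _ = qNorm {f} g * qNorm {g} h := by rw [hllen, hLlen]; ring

private lemma qNorm_ne_zero {f x : G} (hx : x ≠ 1) (hfin : qNorm {f} x ≠ ⊤) :
    qNorm {f} x ≠ 0 := by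
  intro h0
  obtain ⟨l, hlen, hprod, _⟩ := qNorm_exists_list hfin
  rw [h0] at hlen
  have : l.length = 0 := by exact_mod_cast hlen
  rw [List.length_eq_zero_iff] at this
  subst this
  simp at hprod
  exact hx hprod.symm

end Tsuboi

/-- Tsuboi's function `d(x, y) = log (max {q_y(x), q_x(y)})` satisfies the triangle
inequality on nontrivial elements with finite mutual norms. -/
theorem tsuboi_triangle_inequality {G : Type*} [Group G] (f g h : G)
    (hf : f ≠ 1) (hg : g ≠ 1) (hh : h ≠ 1)
    (h1 : qNorm {f} g ≠ ⊤) (h2 : qNorm {g} f ≠ ⊤)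
    (h3 : qNorm {g} h ≠ ⊤) (h4 : qNorm {h} g ≠ ⊤)
    (h5 : qNorm {f} h ≠ ⊤) (h6 : qNorm {h} f ≠ ⊤)
    (d : G → G → ℝ)
    (hd : ∀ x y : G, d x y = Real.log ((max (qNorm {y} x) (qNorm {x} y)).toNat)) :
    d f h ≤ d f g + d g h := by
  rw [hd f h, hd f g, hd g h]
  have hAtop : max (qNorm {g} f) (qNorm {f} g) ≠ ⊤ := (max_lt h2.lt_top h1.lt_top).ne
  have hBtop : max (qNorm {h} g) (qNorm {g} h) ≠ ⊤ := (max_lt h4.lt_top h3.lt_top).ne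
  have hCtop : max (qNorm {h} f) (qNorm {f} h) ≠ ⊤ := (max_lt h6.lt_top h5.lt_top).ne
  have hCle : max (qNorm {h} f) (qNorm {f} h) ≤
      max (qNorm {g} f) (qNorm {f} g) * max (qNorm {h} g) (qNorm {g} h) := by
    apply max_le
    · calc qNorm {h} f ≤ qNorm {h} g * qNorm {g} f := qNorm_submul h4 h2
        _ ≤ max (qNorm {h} g) (qNorm {g} h) * max (qNorm {g} f) (qNorm {f} g) :=
          mul_le_mul' (le_max_left _ _) (le_max_left _ _)
        _ = _ := mul_comm _ _
    · calc qNorm {f} h ≤ qNorm {f} g * qNorm {g} h := qNorm_submul h1 h3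
        _ ≤ _ := mul_le_mul' (le_max_right _ _) (le_max_right _ _)
  have hA0 : max (qNorm {g} f) (qNorm {f} g) ≠ 0 := by
    intro h0
    have hle := le_max_left (qNorm {g} f) (qNorm {f} g)
    rw [h0] at hle
    exact qNorm_ne_zero hf h2 (le_antisymm hle zero_le)
  have hB0 : max (qNorm {h} g) (qNorm {g} h) ≠ 0 := by
    intro h0
    have hle := le_max_left (qNorm {h} g) (qNorm {g} h)
    rw [h0] at hle
    exact qNorm_ne_zero hg h4 (le_antisymm hle zero_le)
  have hC0 : max (qNorm {h} f) (qNorm {f} h) ≠ 0 := by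
    intro h0
    have hle := le_max_left (qNorm {h} f) (qNorm {f} h)
    rw [h0] at hle
    exact qNorm_ne_zero hf h6 (le_antisymm hle zero_le)
  set A := max (qNorm {g} f) (qNorm {f} g)
  set B := max (qNorm {h} g) (qNorm {g} h)
  set C := max (qNorm {h} f) (qNorm {f} h)
  have ha : (A.toNat : ℕ∞) = A := ENat.coe_toNat hAtop
  have hb : (B.toNat : ℕ∞) = B := ENat.coe_toNat hBtop
  have hc : (C.toNat : ℕ∞) = C := ENat.coe_toNat hCtop
  have hCn : C.toNat ≤ A.toNat * B.toNat := by
    have hcast : (C.toNat : ℕ∞) ≤ ((A.toNat * B.toNat : ℕ) : ℕ∞) := by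
      push_cast
      rw [ha, hb, hc]
      exact hCle
    exact_mod_cast hcast
  have hApos : 0 < A.toNat :=
    Nat.pos_of_ne_zero (by simp [ENat.toNat_eq_zero, hA0, hAtop])
  have hBpos : 0 < B.toNat :=
    Nat.pos_of_ne_zero (by simp [ENat.toNat_eq_zero, hB0, hBtop])
  have hCpos : 0 < C.toNat :=
    Nat.pos_of_ne_zero (by simp [ENat.toNat_eq_zero, hC0, hCtop])
  calc Real.log C.toNat ≤ Real.log ((A.toNat * B.toNat : ℕ) : ℝ) := by
        apply Real.log_le_log (by exact_mod_cast hCpos)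
        exact_mod_cast hCn
    _ = Real.log A.toNat + Real.log B.toNat := by
        push_cast
        exact Real.log_mul (by positivity) (by positivity)
end

section
/- Let G be a group, K ⊆ G a subset, φ : G → ℝ a homogeneous quasi-morphism with defect at most D (i.e., |φ(gh) − φ(g) − φ(h)| ≤ D for all g, h, and φ(gᵖ) = p·φ(g) for all g and p ∈ ℤ), and C ≥ 0 a constant with |φ(k)| ≤ C for all k ∈ K. If g ∈ G can be written as a product g = f₁ ⋯ f_n (n ≥ 1) where each f_i is conjugate to an element of K or to the inverse of an element of K, then |φ(g)| ≤ n·(D + C). In particular, |φ(g)| ≤ (D + C) · q_K(g) whenever q_K(g) is finite. -/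
/-- If `φ` is a homogeneous quasi-morphism with defect at most `D` which is bounded
by `C` on `K`, and `g` is a product of `n ≥ 1` conjugates of elements of `K ∪ K⁻¹`,
then `|φ(g)| ≤ n (D + C)`; in particular `|φ(g)| ≤ (D + C) q_K(g)` when `q_K(g)` is
finite. -/
theorem quasimorphism_qNorm_lower_bound {G : Type*} [Group G] (K : Set G)
    (φ : G → ℝ) (D C : ℝ)
    (hD : ∀ g h : G, |φ (g * h) - φ g - φ h| ≤ D)
    (hhom : ∀ (g : G) (p : ℤ), φ (g ^ p) = p * φ g)
    (hC : 0 ≤ C) (hCK : ∀ k ∈ K, |φ k| ≤ C) :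
    (∀ (g : G) (l : List G), l ≠ [] → l.prod = g →
      (∀ x ∈ l, ∃ k ∈ K, IsConj k x ∨ IsConj k⁻¹ x) →
      |φ g| ≤ (l.length : ℝ) * (D + C)) ∧
    (∀ g : G, qNorm K g ≠ ⊤ → |φ g| ≤ (D + C) * ((qNorm K g).toNat : ℝ)) := by
  -- φ(1) = 0
  have h1 : φ 1 = 0 := by
    have := hhom 1 0
    simpa using this
  -- D ≥ 0
  have hD0 : 0 ≤ D := by
    have := hD 1 1
    simp [h1] at this
    linarith [abs_nonneg (φ 1), this]
  -- φ(g⁻¹) = -φ(g)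
  have hinv : ∀ g : G, φ g⁻¹ = -φ g := by
    intro g
    have := hhom g (-1)
    simpa using this
  -- conjugation invariance
  have hconj : ∀ g h : G, φ (h * g * h⁻¹) = φ g := by
    intro g h
    have key : ∀ n : ℕ, (n : ℝ) * |φ (h * g * h⁻¹) - φ g| ≤ 2 * D := by
      intro n
      have hpow : (h * g * h⁻¹) ^ (n : ℤ) = h * g ^ (n : ℤ) * h⁻¹ := by
        rw [conj_zpow]
      have e1 : (n : ℝ) * φ (h * g * h⁻¹) = φ (h * g ^ (n : ℤ) * h⁻¹) := by
        rw [← hpow, hhom]; push_cast; ring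
      have e2 : (n : ℝ) * φ g = φ (g ^ (n : ℤ)) := by
        rw [hhom]; push_cast; ring
      have d1 := hD (h * g ^ (n : ℤ)) h⁻¹
      have d2 := hD h (g ^ (n : ℤ))
      rw [hinv h] at d1
      have : |(n : ℝ) * φ (h * g * h⁻¹) - (n : ℝ) * φ g| ≤ 2 * D := by
        rw [e1, e2]
        have := abs_add_le (φ (h * g ^ (n:ℤ) * h⁻¹) - φ (h * g ^ (n:ℤ)) - -φ h)
          (φ (h * g ^ (n:ℤ)) - φ h - φ (g ^ (n:ℤ)))
        calc |φ (h * g ^ (n:ℤ) * h⁻¹) - φ (g ^ (n:ℤ))|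
            = |(φ (h * g ^ (n:ℤ) * h⁻¹) - φ (h * g ^ (n:ℤ)) - -φ h)
              + (φ (h * g ^ (n:ℤ)) - φ h - φ (g ^ (n:ℤ)))| := by ring_nf
          _ ≤ _ := this
          _ ≤ D + D := add_le_add d1 d2
          _ = 2 * D := by ring
      calc (n : ℝ) * |φ (h * g * h⁻¹) - φ g|
          = |(n : ℝ) * φ (h * g * h⁻¹) - (n : ℝ) * φ g| := by
            rw [← mul_sub, abs_mul, abs_of_nonneg (by positivity : (0:ℝ) ≤ (n:ℝ))]
        _ ≤ 2 * D := this
    by_contra hne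
    have hpos : 0 < |φ (h * g * h⁻¹) - φ g| := by
      rw [abs_pos]
      intro h0
      exact hne (by linarith [sub_eq_zero.mp h0])
    obtain ⟨n, hn⟩ := exists_nat_gt ((2 * D) / |φ (h * g * h⁻¹) - φ g|)
    have := key n
    have : (2 * D) / |φ (h * g * h⁻¹) - φ g| < (n : ℝ) := hn
    have hcontra : 2 * D < (n : ℝ) * |φ (h * g * h⁻¹) - φ g| := by
      rw [div_lt_iff₀ hpos] at this
      linarith
    linarith [key n]
  -- each factor is bounded by C
  have hbound : ∀ x : G, (∃ k ∈ K, IsConj k x ∨ IsConj k⁻¹ x) → |φ x| ≤ C := by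
    rintro x ⟨k, hk, hcase⟩
    rcases hcase with hc | hc
    · obtain ⟨c, hc⟩ := isConj_iff.mp hc
      have : φ x = φ k := by rw [← hc]; exact hconj k c
      rw [this]; exact hCK k hk
    · obtain ⟨c, hc⟩ := isConj_iff.mp hc
      have : φ x = φ k⁻¹ := by rw [← hc]; exact hconj k⁻¹ c
      rw [this, hinv, abs_neg]; exact hCK k hk
  -- list induction
  have hlist : ∀ l : List G, (∀ x ∈ l, |φ x| ≤ C) →
      |φ l.prod| ≤ (l.length : ℝ) * (D + C) := by
    intro l
    induction l with
    | nil => intro _; simp [h1]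
    | cons x t ih =>
      intro hmem
      have hx : |φ x| ≤ C := hmem x List.mem_cons_self
      have ht : |φ t.prod| ≤ (t.length : ℝ) * (D + C) :=
        ih (fun y hy => hmem y (List.mem_cons_of_mem x hy))
      have hd := hD x t.prod
      calc |φ (x :: t).prod| = |φ (x * t.prod)| := by rw [List.prod_cons]
        _ = |(φ (x * t.prod) - φ x - φ t.prod) + φ x + φ t.prod| := by ring_nf
        _ ≤ |φ (x * t.prod) - φ x - φ t.prod| + |φ x| + |φ t.prod| := abs_add_three _ _ _
        _ ≤ D + C + (t.length : ℝ) * (D + C) := by linarith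
        _ = ((x :: t).length : ℝ) * (D + C) := by
            simp [List.length_cons]; push_cast; ring
  constructor
  · intro g l _ hprod hmem
    rw [← hprod]
    exact hlist l (fun x hx => hbound x (hmem x hx))
  · intro g htop
    set S := {n : ℕ∞ | ∃ l : List G, (l.length : ℕ∞) = n ∧ l.prod = g ∧
      ∀ x ∈ l, ∃ k ∈ K, IsConj k x ∨ IsConj k⁻¹ x} with hS
    have hne : S.Nonempty := by
      by_contra hemp
      rw [Set.not_nonempty_iff_eq_empty] at hemp
      apply htop
      rw [qNorm, ← hS, hemp, sInf_empty]
    have hmem : sInf S ∈ S := csInf_mem hne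
    obtain ⟨l, hlen, hprod, hl⟩ := hmem
    have hq : qNorm K g = (l.length : ℕ∞) := (hlen.trans rfl).symm
    rw [hq]
    have : ((l.length : ℕ∞).toNat : ℝ) = (l.length : ℝ) := by simp
    rw [this, mul_comm]
    rw [← hprod]
    exact hlist l (fun x hx => hbound x (hl x hx))
end

section
/- Let G be a group admitting a homogeneous quasi-morphism φ : G → ℝ (finite defect D(φ) and φ(gᵖ) = p·φ(g) for all p ∈ ℤ) and let g ∈ G with φ(g) ≠ 0. Then for every f ∈ G and every natural number M, there exists p ∈ ℕ such that either q_f(gᵖ) = ∞ or q_f(gᵖ) > M; in other words, the values q_f(gᵖ) are unbounded in p. In particular, the conjugation-generated norms on G are unbounded (G is not uniformly simple). -/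
/-- If `G` admits a homogeneous quasi-morphism `φ` with `φ(g) ≠ 0`, then for every
`f ∈ G` the values `q_f(gᵖ)` are unbounded in `p`: for every `M` there is `p` with
`q_f(gᵖ) = ∞` or `q_f(gᵖ) > M`.  In particular `G` is not uniformly simple. -/
theorem qNorm_unbounded_of_quasimorphism {G : Type*} [Group G]
    (φ : G → ℝ)
    (hqm : ∃ D : ℝ, ∀ g h : G, |φ (g * h) - φ g - φ h| ≤ D)
    (hhom : ∀ (g : G) (p : ℤ), φ (g ^ p) = p * φ g)
    (g : G) (hg : φ g ≠ 0) :
    ∀ (f : G) (M : ℕ), ∃ p : ℕ,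
      qNorm {f} (g ^ p) = ⊤ ∨ (M : ℕ∞) < qNorm {f} (g ^ p) := by
  intro f M
  obtain ⟨D, hD⟩ := hqm
  have hφ1 : φ 1 = 0 := by simpa using hhom 1 0
  have hD0 : 0 ≤ D := by
    have := hD 1 1
    rw [one_mul, hφ1] at this
    simpa using this
  have hinv : ∀ x : G, φ x⁻¹ = -φ x := by
    intro x
    have := hhom x (-1)
    simpa using this
  -- conjugation invariance
  have hconj : ∀ h x : G, φ (h * x * h⁻¹) = φ x := by
    intro h x
    by_contra hne
    have hc : 0 < |φ (h * x * h⁻¹) - φ x| := by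
      rw [abs_pos]; intro h0; exact hne (by linarith [sub_eq_zero.mp h0])
    obtain ⟨n, hn⟩ := exists_nat_gt ((2 * D) / |φ (h * x * h⁻¹) - φ x|)
    have key : (n : ℝ) * |φ (h * x * h⁻¹) - φ x| ≤ 2 * D := by
      have e1 : (h * x * h⁻¹) ^ (n : ℤ) = h * x ^ (n : ℤ) * h⁻¹ := conj_zpow
      have hh := hhom (h * x * h⁻¹) (n : ℤ)
      rw [e1, mul_assoc] at hh
      have hx := hhom x (n : ℤ)
      push_cast at hh hx
      have h1 := hD h (x ^ (n : ℤ) * h⁻¹)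
      have h2' : |φ (x ^ (n : ℤ) * h⁻¹) - φ (x ^ (n : ℤ)) + φ h| ≤ D := by
        have h2 := hD (x ^ (n : ℤ)) h⁻¹
        rw [hinv h, sub_neg_eq_add] at h2
        exact h2
      have heq : (n : ℝ) * φ (h * x * h⁻¹) - (n : ℝ) * φ x =
          (φ (h * (x ^ (n : ℤ) * h⁻¹)) - φ h - φ (x ^ (n : ℤ) * h⁻¹)) +
          (φ (x ^ (n : ℤ) * h⁻¹) - φ (x ^ (n : ℤ)) + φ h) := by
        rw [← hh, ← hx]; ring
      calc (n : ℝ) * |φ (h * x * h⁻¹) - φ x|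
          = |(n : ℝ) * φ (h * x * h⁻¹) - (n : ℝ) * φ x| := by
            rw [← mul_sub, abs_mul, Nat.abs_cast]
        _ ≤ 2 * D := by
            rw [heq]
            calc _ ≤ _ := abs_add_le _ _
              _ ≤ 2 * D := by linarith
    have : (2 * D) / |φ (h * x * h⁻¹) - φ x| < (2 * D) / |φ (h * x * h⁻¹) - φ x| := by
      calc (2 * D) / |φ (h * x * h⁻¹) - φ x| < n := hn
        _ ≤ (2 * D) / |φ (h * x * h⁻¹) - φ x| := (le_div_iff₀ hc).mpr key
    exact lt_irrefl _ this
  -- values of φ on conjugates of f or f⁻¹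
  have hval : ∀ x : G, (IsConj f x ∨ IsConj f⁻¹ x) → |φ x| ≤ |φ f| := by
    rintro x (hx | hx) <;> obtain ⟨c, hc⟩ := isConj_iff.mp hx <;>
      simp [← hc, hconj, hinv, abs_neg]
  -- bound on products
  have hbound : ∀ l : List G, (∀ x ∈ l, |φ x| ≤ |φ f|) →
      |φ l.prod| ≤ l.length * (|φ f| + D) := by
    intro l
    induction l with
    | nil => intro _; simp [hφ1]
    | cons a l ih =>
      intro hl
      have ha := hl a List.mem_cons_self
      have hl' := ih (fun x hx => hl x (List.mem_cons_of_mem a hx))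
      have h1 := hD a l.prod
      have : |φ (a * l.prod)| ≤ |φ a| + |φ l.prod| + D := by
        have := abs_add_le (φ (a * l.prod) - φ a - φ l.prod) (φ a + φ l.prod)
        calc |φ (a * l.prod)| = |(φ (a * l.prod) - φ a - φ l.prod) + (φ a + φ l.prod)| := by
              ring_nf
          _ ≤ |φ (a * l.prod) - φ a - φ l.prod| + |φ a + φ l.prod| := abs_add_le _ _
          _ ≤ D + (|φ a| + |φ l.prod|) := by
              have := abs_add_le (φ a) (φ l.prod); linarith
          _ = |φ a| + |φ l.prod| + D := by ring
      rw [List.prod_cons]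
      calc |φ (a * l.prod)| ≤ |φ a| + |φ l.prod| + D := this
        _ ≤ |φ f| + l.length * (|φ f| + D) + D := by linarith
        _ = (l.length + 1) * (|φ f| + D) := by ring
        _ = (a :: l).length * (|φ f| + D) := by push_cast [List.length_cons]; ring
  -- choose p
  have hgpos : 0 < |φ g| := abs_pos.mpr hg
  obtain ⟨p, hp⟩ := exists_nat_gt ((M * (|φ f| + D)) / |φ g|)
  refine ⟨p, Or.inr ?_⟩
  have hkey : ∀ n ∈ {n : ℕ∞ | ∃ l : List G, (l.length : ℕ∞) = n ∧ l.prod = g ^ p ∧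
      ∀ x ∈ l, ∃ k ∈ ({f} : Set G), IsConj k x ∨ IsConj k⁻¹ x}, ((M : ℕ∞) + 1) ≤ n := by
    rintro n ⟨l, hlen, hprod, hmem⟩
    have hφgp : |φ (g ^ p)| = p * |φ g| := by
      have := hhom g (p : ℤ)
      rw [← zpow_natCast g p, this, abs_mul]
      push_cast
      rw [abs_of_nonneg (by positivity : (0:ℝ) ≤ (p:ℝ))]
    have hb : |φ (g ^ p)| ≤ l.length * (|φ f| + D) := by
      rw [← hprod]
      refine hbound l fun x hx => ?_
      obtain ⟨k, hk, hck⟩ := hmem x hx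
      rw [Set.mem_singleton_iff] at hk
      subst hk
      exact hval x hck
    -- show M < l.length
    by_contra hlt
    push_neg at hlt
    have hnM : n ≤ (M : ℕ∞) := (ENat.lt_add_one_iff (by simp)).mp hlt
    have hlM : (l.length : ℕ) ≤ M := by
      rw [← hlen] at hnM
      exact_mod_cast hnM
    have hDf : 0 ≤ |φ f| + D := by positivity
    have h1 : (p : ℝ) * |φ g| ≤ M * (|φ f| + D) := by
      calc (p : ℝ) * |φ g| = |φ (g ^ p)| := hφgp.symm
        _ ≤ l.length * (|φ f| + D) := hb
        _ ≤ M * (|φ f| + D) := by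
            apply mul_le_mul_of_nonneg_right _ hDf
            exact_mod_cast hlM
    have h2 : M * (|φ f| + D) < p * |φ g| := (div_lt_iff₀ hgpos).mp hp
    linarith
  have : ((M : ℕ∞) + 1) ≤ qNorm {f} (g ^ p) := le_sInf hkey
  calc (M : ℕ∞) < (M : ℕ∞) + 1 := (ENat.lt_add_one_iff (by simp)).mpr le_rfl
    _ ≤ _ := this
end

section
/- Let (X, d) be a metric space, x : ℕ → X and y : ℕ → X sequences in X, and C₁ > 0, C₂ > 0, C₃ ∈ ℝ constants such that: (i) d(x_n, x_m) ≥ C₁·|n − m| for all n, m; (ii) d(x_n, x_{n+1}) ≤ C₂ for all n; (iii) d(x_n, y_m) ≥ log m + C₃ for all n and all m ≥ 1. Then there is no quasi-isometric embedding of X into the half line: there exist no map Φ : X → ℝ and constants A ≥ 1, B ≥ 0 such that Φ(p) ≥ 0 for all p ∈ X and (1/A)·d(p, q) − B ≤ |Φ(p) − Φ(q)| ≤ A·d(p, q) + B for all p, q ∈ X. -/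
/-- A metric space containing a quasi-geodesic ray `x` together with a sequence `y`
whose distances to all `x n` grow like `log m` admits no quasi-isometric embedding
into the half line `[0, ∞)`. -/
theorem no_quasi_isometric_embedding_into_half_line
    {X : Type*} [MetricSpace X] (x y : ℕ → X) (C₁ C₂ C₃ : ℝ)
    (hC₁ : 0 < C₁) (hC₂ : 0 < C₂)
    (h1 : ∀ n m : ℕ, C₁ * |(n : ℝ) - (m : ℝ)| ≤ dist (x n) (x m))
    (h2 : ∀ n : ℕ, dist (x n) (x (n + 1)) ≤ C₂)
    (h3 : ∀ n m : ℕ, 1 ≤ m → Real.log m + C₃ ≤ dist (x n) (y m)) :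
    ¬ ∃ (Φ : X → ℝ) (A B : ℝ), 1 ≤ A ∧ 0 ≤ B ∧ (∀ p : X, 0 ≤ Φ p) ∧
      ∀ p q : X, (1 / A) * dist p q - B ≤ |Φ p - Φ q| ∧
        |Φ p - Φ q| ≤ A * dist p q + B := by
  classical
  rintro ⟨Φ, A, B, hA, hB, hpos, hQI⟩
  have hA0 : (0:ℝ) < A := lt_of_lt_of_le one_pos hA
  set f : ℕ → ℝ := fun n => Φ (x n) with hf
  -- linear growth of f
  have hgrow : ∀ n : ℕ, (1 / A) * (C₁ * n) - B - f 0 ≤ f n := by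
    intro n
    have hd : C₁ * n ≤ dist (x n) (x 0) := by
      have h := h1 n 0
      simp only [Nat.cast_zero, sub_zero] at h
      rwa [abs_of_nonneg (by positivity : (0:ℝ) ≤ (n:ℝ))] at h
    have hl := (hQI (x n) (x 0)).1
    have habs : |f n - f 0| ≤ f n + f 0 := by
      have h0 : 0 ≤ f n := hpos _
      have h0' : 0 ≤ f 0 := hpos _
      rw [abs_sub_le_iff]; constructor <;> linarith
    have hmul : (1 / A) * (C₁ * n) ≤ (1 / A) * dist (x n) (x 0) := by
      apply mul_le_mul_of_nonneg_left hd
      positivity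
    linarith
  -- every nonnegative value lies within K of some f n
  set S : ℝ := A * C₂ + B with hS
  set K : ℝ := max (f 0) S with hK
  have key : ∀ t : ℝ, 0 ≤ t → ∃ n : ℕ, |f n - t| ≤ K := by
    intro t ht
    by_cases hcase : t ≤ f 0
    · exact ⟨0, by rw [abs_of_nonneg (by linarith)]; calc f 0 - t ≤ f 0 := by linarith
        _ ≤ K := le_max_left _ _⟩
    push_neg at hcase
    have hex : ∃ n : ℕ, t ≤ f n := by
      refine ⟨⌈A * (t + B + f 0) / C₁⌉₊, ?_⟩
      have hN : A * (t + B + f 0) / C₁ ≤ (⌈A * (t + B + f 0) / C₁⌉₊ : ℝ) := Nat.le_ceil _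
      have := hgrow ⌈A * (t + B + f 0) / C₁⌉₊
      have h' : A * (t + B + f 0) ≤ C₁ * (⌈A * (t + B + f 0) / C₁⌉₊ : ℝ) := by
        rw [div_le_iff₀ hC₁] at hN; linarith [hN]
      have hmul := mul_le_mul_of_nonneg_left h' (by positivity : (0:ℝ) ≤ 1 / A)
      have heq : (1 / A) * (A * (t + B + f 0)) = t + B + f 0 := by field_simp
      have h'' : t + B + f 0 ≤ (1 / A) * (C₁ * (⌈A * (t + B + f 0) / C₁⌉₊ : ℝ)) := by
        linarith
      linarith
    let n := Nat.find hex
    have hn : t ≤ f n := Nat.find_spec hex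
    have hn0 : n ≠ 0 := by
      intro h0
      have := hn
      rw [h0] at this
      exact absurd this (not_le.mpr hcase)
    obtain ⟨k, hk⟩ := Nat.exists_eq_succ_of_ne_zero hn0
    have hlt : ¬ t ≤ f k := Nat.find_min hex (by omega)
    push_neg at hlt
    have hstep : |f n - f k| ≤ S := by
      have := (hQI (x k) (x n)).2
      have hd := h2 k
      rw [hk]
      calc |f (k+1) - f k| = |f k - f (k+1)| := abs_sub_comm _ _
        _ ≤ A * dist (x k) (x (k+1)) + B := by simpa [hk] using (hQI (x k) (x (k+1))).2
        _ ≤ A * C₂ + B := by nlinarith [h2 k]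
    refine ⟨n, ?_⟩
    rw [abs_of_nonneg (by linarith)]
    have : f n - f k ≤ S := (abs_le.mp hstep).2
    calc f n - t ≤ f n - f k := by linarith
      _ ≤ S := this
      _ ≤ K := le_max_right _ _
  -- derive contradiction using m large
  set D : ℝ := A * (K + B) with hD
  set m : ℕ := ⌈Real.exp (D - C₃)⌉₊ + 1 with hm
  have hm1 : 1 ≤ m := by omega
  obtain ⟨n, hn⟩ := key (Φ (y m)) (hpos _)
  have hlow := (hQI (x n) (y m)).1
  have hdist : dist (x n) (y m) ≤ D := by
    have : (1 / A) * dist (x n) (y m) - B ≤ K := le_trans hlow hn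
    have h' : (1 / A) * dist (x n) (y m) ≤ K + B := by linarith
    have := mul_le_mul_of_nonneg_left h' (le_of_lt hA0)
    calc dist (x n) (y m) = A * ((1 / A) * dist (x n) (y m)) := by field_simp
      _ ≤ A * (K + B) := this
      _ = D := rfl
  have hlog : D - C₃ < Real.log m := by
    have h1' : Real.exp (D - C₃) ≤ (⌈Real.exp (D - C₃)⌉₊ : ℝ) := Nat.le_ceil _
    have h2' : Real.exp (D - C₃) < (m : ℝ) := by
      rw [hm]; push_cast; linarith
    calc D - C₃ = Real.log (Real.exp (D - C₃)) := (Real.log_exp _).symm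
      _ < Real.log m := Real.log_lt_log (Real.exp_pos _) h2'
  have := h3 n m hm1
  linarith
end
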